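/- Fix a real g > 0 and positive integers a, b; set ω₁ = a·g, ω₂ = b·g, T = 2π/g, and for a positive integer M let t_i = T(i−1)/M for i = 1, …, M. Let p be a positive integer, assume M > 2p·max(a, b), and let m, n be integers with |m| + |n| ≤ p and m·a + n·b ≠ 0. Then (2/M)·∑_{i=1}^{M} cos²((m ω₁ + n ω₂) t_i) = 1 and (2/M)·∑_{i=1}^{M} sin²((m ω₁ + n ω₂) t_i) = 1. -/

import Mathlib

open Real

lemma sum_exp_zero (M : ℕ) (k : ℤ) (hM : 0 < M) (h : ¬ ((M:ℤ) ∣ k)) :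
    ∑ j ∈ Finset.range M, Complex.exp (((2 * π * k / M : ℝ) : ℂ) * Complex.I) ^ j = 0 := by
  set z : ℂ := Complex.exp (((2 * π * k / M : ℝ) : ℂ) * Complex.I) with hz
  have hMne : (M : ℝ) ≠ 0 := Nat.cast_ne_zero.mpr hM.ne'
  have hz1 : z ≠ 1 := by
    intro hzz
    rw [hz, Complex.exp_eq_one_iff] at hzz
    obtain ⟨c, hc⟩ := hzz
    have h2 : (2 * π * k / M : ℝ) = c * (2 * π) := by
      have : ((2 * π * k / M : ℝ) : ℂ) * Complex.I = ((c * (2 * π) : ℝ) : ℂ) * Complex.I := by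
        rw [hc]; push_cast; ring
      have := mul_right_cancel₀ Complex.I_ne_zero this
      exact_mod_cast this
    have hπ : (π : ℝ) ≠ 0 := Real.pi_ne_zero
    have hkc : (k : ℝ) = c * M := by
      field_simp at h2
      nlinarith [h2, Real.pi_pos]
    have : k = c * M := by exact_mod_cast hkc
    exact h ⟨c, by rw [this, mul_comm]⟩
  have hzM : z ^ M = 1 := by
    rw [hz, ← Complex.exp_nat_mul]
    have : (M : ℂ) * (((2 * π * k / M : ℝ) : ℂ) * Complex.I) = (k : ℂ) * (2 * π * Complex.I) := by
      push_cast
      have : (M : ℂ) ≠ 0 := Nat.cast_ne_zero.mpr hM.ne'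
      field_simp
    rw [this, Complex.exp_int_mul_two_pi_mul_I]
  rw [geom_sum_eq hz1, hzM]
  simp

lemma sum_cos_zero (M : ℕ) (k : ℤ) (hM : 0 < M) (h : ¬ ((M:ℤ) ∣ k)) :
    ∑ j ∈ Finset.range M, Real.cos (2 * π * k * j / M) = 0 := by
  have key := sum_exp_zero M k hM h
  have heq : ∀ j : ℕ, Complex.exp (((2 * π * k / M : ℝ) : ℂ) * Complex.I) ^ j
      = Complex.exp (((2 * π * k * j / M : ℝ) : ℂ) * Complex.I) := by
    intro j
    rw [← Complex.exp_nat_mul]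
    congr 1
    push_cast
    ring
  rw [Finset.sum_congr rfl fun j _ => heq j] at key
  have hre : ∑ j ∈ Finset.range M, Real.cos (2 * π * k * j / M)
      = (∑ j ∈ Finset.range M, Complex.exp (((2 * π * k * j / M : ℝ) : ℂ) * Complex.I)).re := by
    rw [Complex.re_sum]
    exact Finset.sum_congr rfl fun j _ => (Complex.exp_ofReal_mul_I_re _).symm
  rw [hre, key, Complex.zero_re]

theorem RMHB_discrete_diag_one (g : ℝ) (hg : 0 < g) (a b : ℕ)
    (ha : 0 < a) (hb : 0 < b) (p M : ℕ) (hp : 0 < p)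
    (hM : 2 * p * max a b < M)
    (m n : ℤ) (hmn : m.natAbs + n.natAbs ≤ p)
    (hne : m * (a : ℤ) + n * (b : ℤ) ≠ 0) :
    (2 / (M : ℝ)) * ∑ i ∈ Finset.Icc 1 M,
        (Real.cos (((m : ℝ) * ((a : ℝ) * g) + (n : ℝ) * ((b : ℝ) * g)) *
            ((2 * π / g) * ((i : ℝ) - 1) / M))) ^ 2 = 1 ∧
    (2 / (M : ℝ)) * ∑ i ∈ Finset.Icc 1 M,
        (Real.sin (((m : ℝ) * ((a : ℝ) * g) + (n : ℝ) * ((b : ℝ) * g)) *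
            ((2 * π / g) * ((i : ℝ) - 1) / M))) ^ 2 = 1 := by
  have hM0 : 0 < M := lt_of_le_of_lt (Nat.zero_le _) hM
  have hMne : (M : ℝ) ≠ 0 := Nat.cast_ne_zero.mpr hM0.ne'
  set k : ℤ := m * a + n * b with hk
  have hkbound : k.natAbs ≤ p * max a b := by
    have h1 : k.natAbs ≤ (m * a).natAbs + (n * b).natAbs := Int.natAbs_add_le _ _
    have h2 : (m * (a:ℤ)).natAbs = m.natAbs * a := by simp [Int.natAbs_mul]
    have h3 : (n * (b:ℤ)).natAbs = n.natAbs * b := by simp [Int.natAbs_mul]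
    calc k.natAbs ≤ m.natAbs * a + n.natAbs * b := by omega
      _ ≤ m.natAbs * max a b + n.natAbs * max a b := by
          gcongr <;> omega
      _ = (m.natAbs + n.natAbs) * max a b := by ring
      _ ≤ p * max a b := by gcongr
  have hndvd : ¬ ((M : ℤ) ∣ 2 * k) := by
    intro hd
    have hkne : (2 * k) ≠ 0 := by simpa [hk] using hne
    have h1 : (M:ℤ) ≤ ((2*k).natAbs : ℤ) := by
      have hdd : (M:ℤ) ∣ ((2*k).natAbs : ℤ) := (Int.dvd_natAbs).mpr hd
      exact Int.le_of_dvd (by exact_mod_cast Int.natAbs_pos.mpr hkne) hdd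
    have h2 : (2*k).natAbs = 2 * k.natAbs := by
      rw [Int.natAbs_mul]; rfl
    have hM' : 2 * (p * max a b) < M := by rwa [mul_assoc] at hM
    omega
  -- reindex and rewrite the angle
  have hangle : ∀ f : ℝ → ℝ,
      (∑ i ∈ Finset.Icc 1 M, f (((m : ℝ) * ((a : ℝ) * g) + (n : ℝ) * ((b : ℝ) * g)) *
            ((2 * π / g) * ((i : ℝ) - 1) / M)))
      = ∑ j ∈ Finset.range M, f (2 * π * k * j / M) := by
    intro f
    rw [← Finset.Ico_add_one_right_eq_Icc, Finset.sum_Ico_eq_sum_range]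
    simp only [Nat.add_sub_cancel]
    refine Finset.sum_congr rfl fun j _ => ?_
    congr 1
    have : ((1 + j : ℕ) : ℝ) - 1 = (j : ℝ) := by push_cast; ring
    rw [this]
    have hgne := hg.ne'
    push_cast [hk]
    field_simp
  have hcossum : ∑ j ∈ Finset.range M, Real.cos (2 * π * k * j / M) ^ 2 = (M : ℝ) / 2 := by
    have hsplit : ∀ j ∈ Finset.range M, Real.cos (2 * π * k * j / M) ^ 2
        = 1 / 2 + Real.cos (2 * π * ((2 * k : ℤ) : ℝ) * j / M) / 2 := by
      intro j _
      rw [Real.cos_sq]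
      congr 2
      push_cast
      ring
    rw [Finset.sum_congr rfl hsplit, Finset.sum_add_distrib, ← Finset.sum_div, ← Finset.sum_div,
      sum_cos_zero M (2 * k) hM0 hndvd]
    simp [Finset.sum_const, Finset.card_range]
  constructor
  · rw [show (fun i : ℕ => (Real.cos (((m : ℝ) * ((a : ℝ) * g) + (n : ℝ) * ((b : ℝ) * g)) *
            ((2 * π / g) * ((i : ℝ) - 1) / M))) ^ 2) = fun i : ℕ => (fun x => Real.cos x ^ 2)
            (((m : ℝ) * ((a : ℝ) * g) + (n : ℝ) * ((b : ℝ) * g)) *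
            ((2 * π / g) * ((i : ℝ) - 1) / M)) from rfl]
    rw [hangle (fun x => Real.cos x ^ 2), hcossum]
    field_simp
  · rw [show (fun i : ℕ => (Real.sin (((m : ℝ) * ((a : ℝ) * g) + (n : ℝ) * ((b : ℝ) * g)) *
            ((2 * π / g) * ((i : ℝ) - 1) / M))) ^ 2) = fun i : ℕ => (fun x => Real.sin x ^ 2)
            (((m : ℝ) * ((a : ℝ) * g) + (n : ℝ) * ((b : ℝ) * g)) *
            ((2 * π / g) * ((i : ℝ) - 1) / M)) from rfl]
    rw [hangle (fun x => Real.sin x ^ 2)]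
    have : ∀ j ∈ Finset.range M, Real.sin (2 * π * k * j / M) ^ 2
        = 1 - Real.cos (2 * π * k * j / M) ^ 2 := by
      intro j _
      rw [Real.sin_sq]
    rw [Finset.sum_congr rfl this, Finset.sum_sub_distrib, hcossum]
    simp only [Finset.sum_const, Finset.card_range, nsmul_eq_mul, mul_one]
    field_simp
    ring
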